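/- arXiv:2112.07056 — 2 statements merged into one kernel-verified Lean document; each statement's English description precedes it below -/
import Mathlib

section
/- The rational function R(z,w) = (w - z²)² / ((w + 3z²)(z - w)(z - 1)) is a first integral of the dual billiard on the parabola γ = {w = z²} defined by the involution family σ_P : u ↦ -u/(1 + f(z₀)u), f(z) = (5z-3)/(2z(z-1)), u = z - z₀: for every P = (z₀, z₀²) with z₀ ∉ {0,1}, the restriction of R to the tangent line L_P = {w = 2z₀z - z₀²} satisfies R ∘ σ_P = R on L_P. -/
/-- The rational function `R(z,w) = (w - z²)² / ((w + 3z²)(z - w)(z - 1))`. -/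
noncomputable def Rb1 (z w : ℂ) : ℂ :=
  (w - z ^ 2) ^ 2 / ((w + 3 * z ^ 2) * (z - w) * (z - 1))

/-- `f(z) = (5z - 3)/(2z(z-1))`. -/
noncomputable def fb1 (z : ℂ) : ℂ := (5 * z - 3) / (2 * z * (z - 1))

/-- The dual billiard involution on the tangent line, in the coordinate `u = z - z₀`. -/
noncomputable def sigmaU (f u : ℂ) : ℂ := -u / (1 + f * u)

/-- The point of the tangent line `L_P = {w = 2z₀ z - z₀²}` to the parabola `{w = z²}`
at `P = (z₀, z₀²)` with coordinate `u = z - z₀`. -/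
noncomputable def linePt (z₀ u : ℂ) : ℂ × ℂ := (z₀ + u, z₀ ^ 2 + 2 * z₀ * u)

set_option maxHeartbeats 2000000 in
/-- the rational function `R(z,w) = (w-z²)²/((w+3z²)(z-w)(z-1))` is a
first integral of the dual billiard on the parabola `γ = {w = z²}` defined by the
involution family `σ_P : u ↦ -u/(1 + f(z₀)u)`, `f(z) = (5z-3)/(2z(z-1))`: for every
`P = (z₀, z₀²)` with `z₀ ∉ {0,1}`, one has `R ∘ σ_P = R` on the tangent line `L_P`
(at every point of `L_P` where both sides are defined). -/
theorem Rb1_is_integral (z₀ : ℂ) (h0 : z₀ ≠ 0) (h1 : z₀ ≠ 1) (u : ℂ)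
    (hu : 1 + fb1 z₀ * u ≠ 0)
    (hden : ((linePt z₀ u).2 + 3 * (linePt z₀ u).1 ^ 2) *
        ((linePt z₀ u).1 - (linePt z₀ u).2) * ((linePt z₀ u).1 - 1) ≠ 0)
    (hden' : ((linePt z₀ (sigmaU (fb1 z₀) u)).2 + 3 * (linePt z₀ (sigmaU (fb1 z₀) u)).1 ^ 2) *
        ((linePt z₀ (sigmaU (fb1 z₀) u)).1 - (linePt z₀ (sigmaU (fb1 z₀) u)).2) *
        ((linePt z₀ (sigmaU (fb1 z₀) u)).1 - 1) ≠ 0) :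
    Rb1 (linePt z₀ (sigmaU (fb1 z₀) u)).1 (linePt z₀ (sigmaU (fb1 z₀) u)).2
      = Rb1 (linePt z₀ u).1 (linePt z₀ u).2 := by
  have hz1 : z₀ - 1 ≠ 0 := sub_ne_zero.mpr h1
  have hd : (2 * z₀ * (z₀ - 1)) ≠ 0 := by
    simp [h0, hz1, sub_ne_zero]
  have hf : fb1 z₀ = (5 * z₀ - 3) / (2 * z₀ * (z₀ - 1)) := rfl
  have hE : 2 * z₀ * (z₀ - 1) + (5 * z₀ - 3) * u ≠ 0 := by
    intro h
    apply hu
    rw [hf]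
    field_simp
    linear_combination h
  have hs : sigmaU (fb1 z₀) u
      = -u * (2 * z₀ * (z₀ - 1)) / (2 * z₀ * (z₀ - 1) + (5 * z₀ - 3) * u) := by
    rw [sigmaU, hf]
    field_simp
    try ring
  rw [hs] at hden' ⊢
  simp only [Rb1, linePt] at hden' hden ⊢
  rw [div_eq_div_iff hden' hden]
  have hE' : z₀ * 2 * (z₀ - 1) + u * (z₀ * 5 - 3) ≠ 0 := by
    intro h; apply hE; linear_combination h
  field_simp [hE]
  field_simp [hE']
  ring
end

section
/- Let f(x, y) be a function defined on a neighborhood of the origin in ℝ² (or ℂ²) which, for each fixed y, is a rational function of x, and for each fixed x is a rational function of y of degree at most d (with d uniform). Then f is a rational function of the two variables jointly, i.e. f = P(x,y)/Q(x,y) for polynomials P, Q. -/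
open Polynomial Matrix

noncomputable def ratAuxVecPoly (n : ℕ) (c : ℕ → ℝ) : Polynomial ℝ :=
  ∑ i ∈ Finset.range n, Polynomial.monomial i (c i)

lemma ratAuxVecPoly_natDegree_le (n : ℕ) (c : ℕ → ℝ) :
    (ratAuxVecPoly (n + 1) c).natDegree ≤ n := by
  refine Polynomial.natDegree_sum_le_of_forall_le _ _ (fun i hi => ?_)
  exact le_trans (Polynomial.natDegree_monomial_le _) (by
    simpa using Nat.lt_succ_iff.mp (Finset.mem_range.mp hi))

lemma ratAuxVecPoly_eval (n : ℕ) (c : ℕ → ℝ) (a : ℝ) :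
    (ratAuxVecPoly n c).eval a = ∑ i ∈ Finset.range n, c i * a ^ i := by
  simp [ratAuxVecPoly, Polynomial.eval_finset_sum]

lemma ratAuxVecPoly_coeff (n : ℕ) (c : ℕ → ℝ) (k : ℕ) (h : k < n) :
    (ratAuxVecPoly n c).coeff k = c k := by
  rw [ratAuxVecPoly, Polynomial.finset_sum_coeff]
  rw [Finset.sum_eq_single k]
  · simp
  · intro b _ hb; simp [Polynomial.coeff_monomial, hb]
  · intro hk; exact absurd (Finset.mem_range.mpr h) hk

lemma ratAuxSumSplit {M : Type*} [AddCommMonoid M] (n : ℕ) (g : Fin (n + n) → M) :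
    ∑ i, g i = (∑ i : Fin n, g (Fin.castAdd n i)) + ∑ i : Fin n, g (Fin.natAdd n i) := by
  rw [← Equiv.sum_comp finSumFinEquiv g, Fintype.sum_sum_type]
  rfl

lemma ratAuxDetUpdateRowSum {N : Type*} [DecidableEq N] [Fintype N]
    (M : Matrix N N ℝ) (j : N) {α : Type*} (s : Finset α) (v : α → N → ℝ) :
    (M.updateRow j (∑ a ∈ s, v a)).det = ∑ a ∈ s, (M.updateRow j (v a)).det := by
  classical
  induction s using Finset.induction with
  | empty =>
      rw [Finset.sum_empty, Finset.sum_empty]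
      exact Matrix.det_eq_zero_of_row_eq_zero j (fun i => by simp)
  | insert _ _ h ih =>
      rw [Finset.sum_insert h, Finset.sum_insert h, Matrix.det_updateRow_add, ih]

namespace RatAux

noncomputable section

variable (m : ℕ)

def li : Fin (m + 1 + (m + 1)) := ⟨(m + 1) + m, by omega⟩

def lP (y : ℝ) : Fin (m + 1 + (m + 1)) → ℝ := fun i =>
  if (i : ℕ) < m + 1 then y ^ (i : ℕ) else 0

def lQ (y : ℝ) : Fin (m + 1 + (m + 1)) → ℝ := fun i =>
  if (i : ℕ) < m + 1 then 0 else y ^ ((i : ℕ) - (m + 1))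

variable (t : Fin (m + 1 + (m + 1)) → ℝ) (pj qj : Fin (m + 1 + (m + 1)) → Polynomial ℝ)

def drow (x : ℝ) (j : Fin (m + 1 + (m + 1))) : Fin (m + 1 + (m + 1)) → ℝ := fun i =>
  if (i : ℕ) < m + 1 then (qj j).eval x * t j ^ (i : ℕ)
  else -((pj j).eval x * t j ^ ((i : ℕ) - (m + 1)))

def Bc (x : ℝ) : Matrix (Fin (m + 1 + (m + 1))) (Fin (m + 1 + (m + 1))) ℝ := fun r i =>
  if r = li m then 0 else drow m t pj qj x r i

def AP : Matrix (Fin (m + 1 + (m + 1))) (Fin (m + 1 + (m + 1))) (Polynomial (Polynomial ℝ)) :=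
  fun r i =>
    if r = li m then (if (i : ℕ) < m + 1 then X ^ (i : ℕ) else 0)
    else if (i : ℕ) < m + 1 then C (qj r * C (t r ^ (i : ℕ)))
    else C (-(pj r * C (t r ^ ((i : ℕ) - (m + 1)))))

def AQ : Matrix (Fin (m + 1 + (m + 1))) (Fin (m + 1 + (m + 1))) (Polynomial (Polynomial ℝ)) :=
  Matrix.updateRow (AP m t pj qj) (li m)
    (fun i => if (i : ℕ) < m + 1 then 0 else X ^ ((i : ℕ) - (m + 1)))

def E (x y : ℝ) : Polynomial (Polynomial ℝ) →+* ℝ :=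
  Polynomial.eval₂RingHom (Polynomial.evalRingHom x) y

lemma E_CC (x y c : ℝ) (k : ℕ) :
    Polynomial.eval₂ (Polynomial.evalRingHom x) y ((C (C c) : Polynomial (Polynomial ℝ)) ^ k)
      = c ^ k := by
  rw [← Polynomial.coe_eval₂RingHom, map_pow]
  simp

lemma mapAP (x y : ℝ) :
    (AP m t pj qj).map (E x y) = Matrix.updateRow (Bc m t pj qj x) (li m) (lP m y) := by
  funext r i
  by_cases hr : r = li m
  · subst hr
    by_cases hi : (i : ℕ) < m + 1 <;>
      simp [Matrix.map_apply, AP, lP, E, hi]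
  · by_cases hi : (i : ℕ) < m + 1 <;>
      simp [Matrix.map_apply, Matrix.updateRow_apply, hr, AP, Bc, drow, E, hi, E_CC]

lemma mapAQ (x y : ℝ) :
    (AQ m t pj qj).map (E x y) = Matrix.updateRow (Bc m t pj qj x) (li m) (lQ m y) := by
  funext r i
  by_cases hr : r = li m
  · subst hr
    by_cases hi : (i : ℕ) < m + 1 <;>
      simp [Matrix.map_apply, AQ, lQ, E, hi, -Order.lt_add_one_iff]
  · by_cases hi : (i : ℕ) < m + 1 <;>
      simp [Matrix.map_apply, AQ, Matrix.updateRow_apply, hr, AP, Bc, drow, E, hi, E_CC]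

lemma detDegree {ι : Type*} [DecidableEq ι] [Fintype ι] (e : ι) (k : ℕ)
    (A : Matrix ι ι (Polynomial (Polynomial ℝ)))
    (hA : ∀ r i, (A r i).natDegree ≤ if r = e then k else 0) :
    A.det.natDegree ≤ k := by
  rw [Matrix.det_apply]
  refine Polynomial.natDegree_sum_le_of_forall_le _ _ (fun σ _ => ?_)
  have hsmul : (Equiv.Perm.sign σ • ∏ i, A (σ i) i)
      = ((Equiv.Perm.sign σ : ℤ) : Polynomial (Polynomial ℝ)) * ∏ i, A (σ i) i := by
    rw [Units.smul_def, zsmul_eq_mul]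
  rw [hsmul]
  refine le_trans (Polynomial.natDegree_mul_le) ?_
  rw [Polynomial.natDegree_intCast, zero_add]
  refine le_trans (Polynomial.natDegree_prod_le _ _) ?_
  refine le_trans (Finset.sum_le_sum (fun i (_ : i ∈ Finset.univ) => hA (σ i) i)) ?_
  have hiff : ∀ i, (if σ i = e then k else 0) = (if i = σ.symm e then k else 0) := by
    intro i
    refine if_congr ?_ rfl rfl
    exact ⟨fun h => by rw [← h]; simp, fun h => by rw [h]; simp⟩
  simp_rw [hiff]
  simp

lemma entry_deg (a : Polynomial ℝ) (b : ℝ) (k : ℕ) :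
    ((C a * C (C b) ^ k : Polynomial (Polynomial ℝ))).natDegree = 0 := by
  rw [← map_pow, ← _root_.map_mul, Polynomial.natDegree_C]

lemma degAP : ((AP m t pj qj).det).natDegree ≤ m := by
  refine detDegree (li m) m _ (fun r i => ?_)
  have hilt := i.is_lt
  by_cases hr : r = li m
  · subst hr
    by_cases hi : (i : ℕ) < m + 1
    · simp only [AP, if_pos rfl, hi, if_pos, Polynomial.natDegree_X_pow]
      omega
    · simp [AP, hi]
  · by_cases hi : (i : ℕ) < m + 1 <;>
      simp [AP, hr, hi, entry_deg, Polynomial.natDegree_neg]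

lemma degAQ : ((AQ m t pj qj).det).natDegree ≤ m := by
  refine detDegree (li m) m _ (fun r i => ?_)
  have hilt := i.is_lt
  by_cases hr : r = li m
  · subst hr
    by_cases hi : (i : ℕ) < m + 1
    · simp [AQ, hi, -Order.lt_add_one_iff]
    · simp [AQ, hi, Polynomial.natDegree_X_pow, -Order.lt_add_one_iff]
      omega
  · by_cases hi : (i : ℕ) < m + 1 <;>
      simp [AQ, AP, Matrix.updateRow_apply, hr, hi, entry_deg, Polynomial.natDegree_neg]

lemma vanish (x : ℝ) (j : Fin (m + 1 + (m + 1))) (hj : j ≠ li m)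
    (hq : (qj j).eval x ≠ 0) :
    E x (t j) ((AP m t pj qj).det)
      = ((pj j).eval x / (qj j).eval x) * E x (t j) ((AQ m t pj qj).det) := by
  have hP : E x (t j) ((AP m t pj qj).det)
      = ((Bc m t pj qj x).updateRow (li m) (lP m (t j))).det := by
    rw [RingHom.map_det, RingHom.mapMatrix_apply, mapAP]
  have hQ : E x (t j) ((AQ m t pj qj).det)
      = ((Bc m t pj qj x).updateRow (li m) (lQ m (t j))).det := by
    rw [RingHom.map_det, RingHom.mapMatrix_apply, mapAQ]
  rw [hP, hQ]
  set c := (pj j).eval x / (qj j).eval x with hc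
  have hrow : lP m (t j) = c • lQ m (t j) + ((qj j).eval x)⁻¹ • drow m t pj qj x j := by
    funext i
    by_cases hi : (i : ℕ) < m + 1
    · simp only [lP, lQ, drow, hi, if_pos, Pi.add_apply, Pi.smul_apply, smul_eq_mul]
      field_simp
      ring
    · simp only [lP, lQ, drow, hi, if_neg, if_false, Pi.add_apply, Pi.smul_apply, smul_eq_mul, hc]
      field_simp
      ring
  rw [hrow, Matrix.det_updateRow_add, Matrix.det_updateRow_smul, Matrix.det_updateRow_smul]
  have hzero : ((Bc m t pj qj x).updateRow (li m) (drow m t pj qj x j)).det = 0 := by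
    apply Matrix.det_zero_of_row_eq (Ne.symm hj)
    funext i
    simp [Matrix.updateRow_apply, hj, Bc]
  rw [hzero]
  ring

lemma card_ne_li : Fintype.card {j : Fin (m + 1 + (m + 1)) // j ≠ li m} = 2 * m + 1 := by
  have : Fintype.card {j : Fin (m + 1 + (m + 1)) // j = li m} = 1 :=
    Fintype.card_subtype_eq _
  have h2 := Fintype.card_subtype_compl (fun j : Fin (m + 1 + (m + 1)) => j = li m)
  simp only [this, Fintype.card_fin] at h2
  have h3 : Fintype.card {j : Fin (m + 1 + (m + 1)) // j ≠ li m}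
      = m + 1 + (m + 1) - 1 := h2
  omega

lemma vanisher (ht_inj : Function.Injective t) (g : Polynomial ℝ)
    (hdeg : g.natDegree ≤ 2 * m)
    (hev : ∀ j, j ≠ li m → g.eval (t j) = 0) : g = 0 := by
  refine Polynomial.eq_zero_of_natDegree_lt_card_of_eval_eq_zero g
    (f := fun j : {j : Fin (m + 1 + (m + 1)) // j ≠ li m} => t j.1)
    (fun a b h => Subtype.ext (ht_inj h)) (fun j => hev j.1 j.2) ?_
  rw [card_ne_li]
  omega

lemma main_identity (f : ℝ → ℝ → ℝ) (ε : ℝ)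
    (ht_inj : Function.Injective t) (ht_mem : ∀ j, |t j| < ε)
    (hqj : ∀ j x, |x| < ε → (qj j).eval x ≠ 0)
    (hfj : ∀ j x, |x| < ε → f x (t j) = (pj j).eval x / (qj j).eval x)
    (x : ℝ) (hx : |x| < ε)
    (px qx : Polynomial ℝ) (hpxd : px.natDegree ≤ m) (hqxd : qx.natDegree ≤ m)
    (hqx : ∀ y, |y| < ε → qx.eval y ≠ 0)
    (hfx : ∀ y, |y| < ε → f x y = px.eval y / qx.eval y)
    (y : ℝ) (hyb : |y| < ε)
    (hQ : E x y ((AQ m t pj qj).det) ≠ 0) :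
    f x y = E x y ((AP m t pj qj).det) / E x y ((AQ m t pj qj).det) := by
  set Px := ((AP m t pj qj).det).map (Polynomial.evalRingHom x) with hPxd
  set Qx := ((AQ m t pj qj).det).map (Polynomial.evalRingHom x) with hQxd
  have hEP : ∀ z, Polynomial.eval z Px = E x z ((AP m t pj qj).det) := fun z => by
    rw [hPxd, Polynomial.eval_map]; rfl
  have hEQ : ∀ z, Polynomial.eval z Qx = E x z ((AQ m t pj qj).det) := fun z => by
    rw [hQxd, Polynomial.eval_map]; rfl
  have hPd : Px.natDegree ≤ m :=
    le_trans Polynomial.natDegree_map_le (degAP m t pj qj)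
  have hQd : Qx.natDegree ≤ m :=
    le_trans Polynomial.natDegree_map_le (degAQ m t pj qj)
  have hg : qx * Px - px * Qx = 0 := by
    refine vanisher m t ht_inj _ ?_ ?_
    · refine le_trans (Polynomial.natDegree_sub_le _ _) (max_le ?_ ?_) <;>
        exact le_trans (Polynomial.natDegree_mul_le) (by omega)
    · intro j hj
      have h1 : Polynomial.eval (t j) Px = (f x (t j)) * Polynomial.eval (t j) Qx := by
        rw [hEP, hEQ, hfj j x hx]; exact vanish m t pj qj x j hj (hqj j x hx)
      have h2 : f x (t j) = px.eval (t j) / qx.eval (t j) := hfx _ (ht_mem j)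
      have h3 : qx.eval (t j) ≠ 0 := hqx _ (ht_mem j)
      simp only [Polynomial.eval_sub, Polynomial.eval_mul]
      rw [h1, h2]
      field_simp
      ring
  have heq : qx.eval y * Polynomial.eval y Px = px.eval y * Polynomial.eval y Qx := by
    have := congrArg (Polynomial.eval y) hg
    simpa [sub_eq_zero] using this
  rw [hfx y hyb, ← hEP, ← hEQ]
  rw [div_eq_div_iff (hqx y hyb) (by rw [hEQ]; exact hQ)]
  linarith [heq]

lemma mulVec_formula (x : ℝ) (u : Fin (m + 1 + (m + 1)) → ℝ)
    (r : Fin (m + 1 + (m + 1))) (hr : r ≠ li m) :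
    ((Bc m t pj qj x).mulVec u) r
      = (qj r).eval x * (ratAuxVecPoly (m + 1)
          (fun i => if h : i < m + 1 + (m + 1) then u ⟨i, h⟩ else 0)).eval (t r)
        - (pj r).eval x * (ratAuxVecPoly (m + 1)
          (fun i => if h : (m + 1) + i < m + 1 + (m + 1) then u ⟨(m + 1) + i, h⟩ else 0)).eval
            (t r) := by
  show ∑ i, Bc m t pj qj x r i * u i = _
  rw [ratAuxSumSplit (m + 1) (fun i => Bc m t pj qj x r i * u i)]
  rw [ratAuxVecPoly_eval, ratAuxVecPoly_eval, Finset.mul_sum, Finset.mul_sum]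
  rw [← Fin.sum_univ_eq_sum_range
    (fun i => (qj r).eval x * ((if h : i < m + 1 + (m + 1) then u ⟨i, h⟩ else 0) * t r ^ i)) (m+1)]
  rw [← Fin.sum_univ_eq_sum_range
    (fun i => (pj r).eval x *
      ((if h : (m + 1) + i < m + 1 + (m + 1) then u ⟨(m + 1) + i, h⟩ else 0) * t r ^ i)) (m+1)]
  rw [sub_eq_add_neg, ← Finset.sum_neg_distrib]
  congr 1
  · refine Finset.sum_congr rfl (fun i _ => ?_)
    have hval : ((Fin.castAdd (m + 1) i : Fin (m + 1 + (m + 1))) : ℕ) = (i : ℕ) := rfl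
    have hlt : (i : ℕ) < m + 1 := i.is_lt
    have hlt2 : (i : ℕ) < m + 1 + (m + 1) := by omega
    rw [dif_pos hlt2]
    have hu : u ⟨(i : ℕ), hlt2⟩ = u (Fin.castAdd (m + 1) i) := by congr 1
    rw [hu]
    simp only [Bc, drow, hval]
    rw [if_neg hr, if_pos hlt]
    ring
  · refine Finset.sum_congr rfl (fun i _ => ?_)
    have hval : ((Fin.natAdd (m + 1) i : Fin (m + 1 + (m + 1))) : ℕ) = (m + 1) + (i : ℕ) := rfl
    have hlt2 : (m + 1) + (i : ℕ) < m + 1 + (m + 1) := by have := i.is_lt; omega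
    rw [dif_pos hlt2]
    have hu : u ⟨(m + 1) + (i : ℕ), hlt2⟩ = u (Fin.natAdd (m + 1) i) := by congr 1
    rw [hu]
    have hnlt : ¬ ((m + 1) + (i : ℕ) < m + 1) := by omega
    have harith : (m + 1) + (i : ℕ) - (m + 1) = (i : ℕ) := by omega
    simp only [Bc, drow, hval]
    rw [if_neg hr, if_neg hnlt, harith]
    ring

def v0 (p q : Polynomial ℝ) : Fin (m + 1 + (m + 1)) → ℝ := fun i =>
  if (i : ℕ) < m + 1 then p.coeff (i : ℕ) else q.coeff ((i : ℕ) - (m + 1))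

lemma puv0 (p q : Polynomial ℝ) (hp : p.natDegree ≤ m) :
    ratAuxVecPoly (m + 1)
      (fun i => if h : i < m + 1 + (m + 1) then v0 m p q ⟨i, h⟩ else 0) = p := by
  conv_rhs => rw [Polynomial.as_sum_range' p (m + 1) (by omega)]
  refine Finset.sum_congr rfl (fun i hi => ?_)
  have h1 : i < m + 1 := Finset.mem_range.mp hi
  have hlt2 : i < m + 1 + (m + 1) := by omega
  simp [v0, h1, hlt2]

lemma quv0 (p q : Polynomial ℝ) (hq : q.natDegree ≤ m) :
    ratAuxVecPoly (m + 1)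
      (fun i => if h : (m + 1) + i < m + 1 + (m + 1) then v0 m p q ⟨(m + 1) + i, h⟩ else 0)
      = q := by
  conv_rhs => rw [Polynomial.as_sum_range' q (m + 1) (by omega)]
  refine Finset.sum_congr rfl (fun i hi => ?_)
  have h1 : i < m + 1 := Finset.mem_range.mp hi
  have hlt2 : (m + 1) + i < m + 1 + (m + 1) := by omega
  have hnlt : ¬ ((m + 1) + i < m + 1) := by omega
  simp [v0, hnlt, hlt2]

lemma kernel_char (ε : ℝ) (f : ℝ → ℝ → ℝ)
    (ht_inj : Function.Injective t) (ht_mem : ∀ j, |t j| < ε)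
    (hqj : ∀ j x, |x| < ε → (qj j).eval x ≠ 0)
    (hfj : ∀ j x, |x| < ε → f x (t j) = (pj j).eval x / (qj j).eval x)
    (x₀ : ℝ) (hx₀ : |x₀| < ε)
    (p q : Polynomial ℝ) (hpdeg : p.natDegree ≤ m) (hqdeg : q.natDegree ≤ m)
    (hq0 : q ≠ 0)
    (hqne : ∀ y, |y| < ε → q.eval y ≠ 0)
    (hfx₀ : ∀ y, |y| < ε → f x₀ y = p.eval y / q.eval y)
    (hcop : IsCoprime p q)
    (hdeg : q.natDegree = m ∨ (p.natDegree = m ∧ p ≠ 0))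
    (u : Fin (m + 1 + (m + 1)) → ℝ) :
    (Bc m t pj qj x₀).mulVec u = 0 ↔ ∃ c : ℝ, u = c • v0 m p q := by
  have hpjf : ∀ j, (pj j).eval x₀ = f x₀ (t j) * (qj j).eval x₀ := by
    intro j
    rw [hfj j x₀ hx₀]
    exact (div_mul_cancel₀ _ (hqj j x₀ hx₀)).symm
  have hpf : ∀ j : Fin (m + 1 + (m + 1)), p.eval (t j) = f x₀ (t j) * q.eval (t j) := by
    intro j
    rw [hfx₀ _ (ht_mem j)]
    exact (div_mul_cancel₀ _ (hqne _ (ht_mem j))).symm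
  constructor
  · intro hu
    set pu := ratAuxVecPoly (m + 1)
      (fun i => if h : i < m + 1 + (m + 1) then u ⟨i, h⟩ else 0) with hpu
    set qu := ratAuxVecPoly (m + 1)
      (fun i => if h : (m + 1) + i < m + 1 + (m + 1) then u ⟨(m + 1) + i, h⟩ else 0) with hqu
    have hpud : pu.natDegree ≤ m := ratAuxVecPoly_natDegree_le _ _
    have hqud : qu.natDegree ≤ m := ratAuxVecPoly_natDegree_le _ _
    have hcoeff : ∀ i : Fin (m + 1 + (m + 1)),
        u i = if (i : ℕ) < m + 1 then pu.coeff (i : ℕ) else qu.coeff ((i : ℕ) - (m + 1)) := by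
      intro i
      by_cases h' : (i : ℕ) < m + 1
      · rw [if_pos h', hpu, ratAuxVecPoly_coeff _ _ _ h', dif_pos i.is_lt]
      · rw [if_neg h', hqu, ratAuxVecPoly_coeff _ _ _ (by omega), dif_pos (by omega :
          (m + 1) + ((i : ℕ) - (m + 1)) < m + 1 + (m + 1))]
        congr 1
        exact Fin.ext (by simp; omega)
    have heval : ∀ r, r ≠ li m →
        (qj r).eval x₀ * pu.eval (t r) - (pj r).eval x₀ * qu.eval (t r) = 0 := by
      intro r hr
      rw [← mulVec_formula m t pj qj x₀ u r hr, hu]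
      rfl
    have hg2 : q * pu - p * qu = 0 := by
      refine vanisher m t ht_inj _ ?_ ?_
      · refine le_trans (Polynomial.natDegree_sub_le _ _) (max_le ?_ ?_) <;>
          exact le_trans Polynomial.natDegree_mul_le (by omega)
      · intro j hj
        have h1 := heval j hj
        have h2 : (qj j).eval x₀ ≠ 0 := hqj j x₀ hx₀
        rw [hpjf j] at h1
        have h7 : pu.eval (t j) = f x₀ (t j) * qu.eval (t j) :=
          mul_left_cancel₀ h2 (by linear_combination h1)
        simp only [Polynomial.eval_sub, Polynomial.eval_mul]
        rw [h7, hpf j]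
        ring
    have hpq2 : q * pu = p * qu := by linear_combination hg2
    have hfinish : ∀ c : ℝ, pu = p * C c → qu = q * C c → ∃ c' : ℝ, u = c' • v0 m p q := by
      intro c hpc hqc
      refine ⟨c, funext fun i => ?_⟩
      rw [hcoeff i]
      by_cases h' : (i : ℕ) < m + 1
      · rw [if_pos h', hpc, Polynomial.coeff_mul_C]
        simp [v0, h', mul_comm]
      · rw [if_neg h', hqc, Polynomial.coeff_mul_C]
        simp [v0, h', mul_comm]
    rcases hdeg with hqm | ⟨hpm, hp0⟩
    · have hqdvd : q ∣ qu := (hcop.symm).dvd_of_dvd_mul_left ⟨pu, hpq2.symm⟩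
      obtain ⟨h, hh⟩ := hqdvd
      have hpuh : pu = p * h := by
        apply mul_left_cancel₀ hq0
        rw [hpq2, hh]
        ring
      by_cases hh0 : h = 0
      · exact hfinish 0 (by rw [hpuh, hh0]; simp) (by rw [hh, hh0]; simp)
      · have hmul : qu.natDegree = q.natDegree + h.natDegree := by
          rw [hh]; exact Polynomial.natDegree_mul hq0 hh0
        have hhdeg : h.natDegree = 0 := by omega
        exact hfinish (h.coeff 0)
          (by rw [hpuh]; exact congrArg (p * ·) (Polynomial.eq_C_of_natDegree_eq_zero hhdeg))
          (by rw [hh]; exact congrArg (q * ·) (Polynomial.eq_C_of_natDegree_eq_zero hhdeg))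
    · have hpdvd : p ∣ pu := hcop.dvd_of_dvd_mul_left ⟨qu, hpq2⟩
      obtain ⟨h, hh⟩ := hpdvd
      have hquh : qu = q * h := by
        apply mul_left_cancel₀ hp0
        rw [← hpq2, hh]
        ring
      by_cases hh0 : h = 0
      · exact hfinish 0 (by rw [hh, hh0]; simp) (by rw [hquh, hh0]; simp)
      · have hmul : pu.natDegree = p.natDegree + h.natDegree := by
          rw [hh]; exact Polynomial.natDegree_mul hp0 hh0
        have hhdeg : h.natDegree = 0 := by omega
        exact hfinish (h.coeff 0)
          (by rw [hh]; exact congrArg (p * ·) (Polynomial.eq_C_of_natDegree_eq_zero hhdeg))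
          (by rw [hquh]; exact congrArg (q * ·) (Polynomial.eq_C_of_natDegree_eq_zero hhdeg))
  · rintro ⟨c, rfl⟩
    have hv0 : (Bc m t pj qj x₀).mulVec (v0 m p q) = 0 := by
      funext r
      by_cases hr : r = li m
      · subst hr
        show ∑ i, Bc m t pj qj x₀ (li m) i * v0 m p q i = 0
        simp [Bc]
      · rw [mulVec_formula m t pj qj x₀ _ r hr, puv0 m p q hpdeg, quv0 m p q hqdeg]
        rw [hpjf r, hpf r]
        show _ = (0 : Fin (m + 1 + (m + 1)) → ℝ) r
        simp
        ring
    rw [Matrix.mulVec_smul, hv0]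
    simp

lemma Q_ne_zero (ε : ℝ) (hε : 0 < ε) (f : ℝ → ℝ → ℝ)
    (ht_inj : Function.Injective t) (ht_mem : ∀ j, |t j| < ε)
    (hqj : ∀ j x, |x| < ε → (qj j).eval x ≠ 0)
    (hfj : ∀ j x, |x| < ε → f x (t j) = (pj j).eval x / (qj j).eval x)
    (x₀ : ℝ) (hx₀ : |x₀| < ε)
    (p q : Polynomial ℝ) (hpdeg : p.natDegree ≤ m) (hqdeg : q.natDegree ≤ m)
    (hqne : ∀ y, |y| < ε → q.eval y ≠ 0)
    (hfx₀ : ∀ y, |y| < ε → f x₀ y = p.eval y / q.eval y)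
    (hcop : IsCoprime p q)
    (hdeg : q.natDegree = m ∨ (p.natDegree = m ∧ p ≠ 0)) :
    ((AQ m t pj qj).det).map (Polynomial.evalRingHom x₀) ≠ 0 := by
  intro hQ0
  have h0ball : |(0:ℝ)| < ε := by simpa using hε
  have hq0 : q ≠ 0 := fun h => hqne 0 h0ball (by simp [h])
  set B := Bc m t pj qj x₀ with hB
  have hEQ : ∀ z, Polynomial.eval z (((AQ m t pj qj).det).map (Polynomial.evalRingHom x₀))
      = E x₀ z ((AQ m t pj qj).det) := fun z => by rw [Polynomial.eval_map]; rfl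
  have hQz : ∀ z, E x₀ z ((AQ m t pj qj).det) = 0 := fun z => by
    rw [← hEQ, hQ0]; simp
  set Pm := ((AP m t pj qj).det).map (Polynomial.evalRingHom x₀) with hPm
  have hEP : ∀ z, Polynomial.eval z Pm = E x₀ z ((AP m t pj qj).det) := fun z => by
    rw [hPm, Polynomial.eval_map]; rfl
  have hP0 : Pm = 0 := by
    refine vanisher m t ht_inj _
      (le_trans (le_trans Polynomial.natDegree_map_le (degAP m t pj qj)) (by omega)) ?_
    intro j hj
    rw [hEP, vanish m t pj qj x₀ j hj (hqj j x₀ hx₀), hQz]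
    simp
  have hPz : ∀ z, E x₀ z ((AP m t pj qj).det) = 0 := fun z => by rw [← hEP, hP0]; simp
  have hdetP : ∀ z, (B.updateRow (li m) (lP m z)).det = 0 := by
    intro z
    have := hPz z
    rwa [RingHom.map_det, RingHom.mapMatrix_apply, mapAP] at this
  have hdetQ : ∀ z, (B.updateRow (li m) (lQ m z)).det = 0 := by
    intro z
    have := hQz z
    rwa [RingHom.map_det, RingHom.mapMatrix_apply, mapAQ] at this
  set w : Fin (m + 1 + (m + 1)) → ℝ :=
    fun k => (B.updateRow (li m) (Pi.single k (1 : ℝ) : Fin (m + 1 + (m + 1)) → ℝ)).det with hw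
  have hdecomp : ∀ r : Fin (m + 1 + (m + 1)) → ℝ,
      (B.updateRow (li m) r).det = ∑ k, r k * w k := by
    intro r
    have h1 : r = ∑ k, (r k) • (Pi.single k (1 : ℝ) : Fin (m + 1 + (m + 1)) → ℝ) := by
      funext i
      rw [Finset.sum_apply]
      simp [Pi.single_apply]
    conv_lhs => rw [h1]
    rw [ratAuxDetUpdateRowSum]
    refine Finset.sum_congr rfl (fun k _ => ?_)
    rw [Matrix.det_updateRow_smul]
  have hwP : ∀ z, ∑ k, lP m z k * w k = 0 := fun z => by rw [← hdecomp, hdetP]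
  have hwQ : ∀ z, ∑ k, lQ m z k * w k = 0 := fun z => by rw [← hdecomp, hdetQ]
  have hw0 : ∀ k, w k = 0 := by
    have hpolyP : ratAuxVecPoly (m + 1)
        (fun i => if h : i < m + 1 + (m + 1) then w ⟨i, h⟩ else 0) = 0 := by
      apply Polynomial.funext
      intro z
      rw [ratAuxVecPoly_eval, Polynomial.eval_zero]
      have hnat : ∀ i : Fin (m + 1),
          lP m z (Fin.natAdd (m + 1) i) * w (Fin.natAdd (m + 1) i) = 0 := by
        intro i
        have hv : ¬ ((Fin.natAdd (m + 1) i : Fin (m + 1 + (m + 1))) : ℕ) < m + 1 := by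
          simp only [Fin.coe_natAdd]
          omega
        simp [lP, hv]
        exact fun h => absurd h (by omega)
      have hcast : ∀ i : Fin (m + 1),
          lP m z (Fin.castAdd (m + 1) i) * w (Fin.castAdd (m + 1) i)
          = (fun k : ℕ => (if h : k < m + 1 + (m + 1) then w ⟨k, h⟩ else 0) * z ^ k)
              ((Fin.castAdd (m + 1) i : Fin (m + 1 + (m + 1))) : ℕ) := by
        intro i
        have hlt : (i : ℕ) < m + 1 := i.is_lt
        have hlt2 : (i : ℕ) < m + 1 + (m + 1) := by omega
        have hcv : ((Fin.castAdd (m + 1) i : Fin (m + 1 + (m + 1))) : ℕ) = (i : ℕ) := rfl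
        simp only [hcv, dif_pos hlt2]
        have hwc : w ⟨(i : ℕ), hlt2⟩ = w (Fin.castAdd (m + 1) i) := by congr 1
        rw [hwc]
        simp only [lP, hcv, if_pos hlt]
        ring
      have h9 := hwP z
      rw [ratAuxSumSplit (m + 1) (fun k => lP m z k * w k),
        Finset.sum_congr rfl (fun i _ => hnat i), Finset.sum_const_zero, add_zero,
        Finset.sum_congr rfl (fun i _ => hcast i)] at h9
      rw [← Fin.sum_univ_eq_sum_range
        (fun k => (if h : k < m + 1 + (m + 1) then w ⟨k, h⟩ else 0) * z ^ k) (m + 1)]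
      exact h9
    have hpolyQ : ratAuxVecPoly (m + 1)
        (fun i => if h : (m + 1) + i < m + 1 + (m + 1) then w ⟨(m + 1) + i, h⟩ else 0) = 0 := by
      apply Polynomial.funext
      intro z
      rw [ratAuxVecPoly_eval, Polynomial.eval_zero]
      have hnat : ∀ i : Fin (m + 1),
          lQ m z (Fin.castAdd (m + 1) i) * w (Fin.castAdd (m + 1) i) = 0 := by
        intro i
        have hv : ((Fin.castAdd (m + 1) i : Fin (m + 1 + (m + 1))) : ℕ) < m + 1 := i.is_lt
        simp [lQ, hv]
        exact fun h => absurd h (by have := i.is_lt; omega)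
      have hcast : ∀ i : Fin (m + 1),
          lQ m z (Fin.natAdd (m + 1) i) * w (Fin.natAdd (m + 1) i)
          = (fun k : ℕ => (if h : (m + 1) + k < m + 1 + (m + 1) then w ⟨(m + 1) + k, h⟩ else 0)
              * z ^ k) (i : ℕ) := by
        intro i
        have hlt : (i : ℕ) < m + 1 := i.is_lt
        have hlt2 : (m + 1) + (i : ℕ) < m + 1 + (m + 1) := by omega
        have hcv : ((Fin.natAdd (m + 1) i : Fin (m + 1 + (m + 1))) : ℕ) = (m + 1) + (i : ℕ) :=
          rfl
        simp only [dif_pos hlt2]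
        have hwc : w ⟨(m + 1) + (i : ℕ), hlt2⟩ = w (Fin.natAdd (m + 1) i) := by congr 1
        rw [hwc]
        have hnlt : ¬ ((m + 1) + (i : ℕ) < m + 1) := by omega
        have harith : (m + 1) + (i : ℕ) - (m + 1) = (i : ℕ) := by omega
        simp only [lQ, hcv, if_neg hnlt, harith]
        ring
      have h9 := hwQ z
      rw [ratAuxSumSplit (m + 1) (fun k => lQ m z k * w k),
        Finset.sum_congr rfl (fun i _ => hnat i), Finset.sum_const_zero, zero_add,
        Finset.sum_congr rfl (fun i _ => hcast i)] at h9
      rw [← Fin.sum_univ_eq_sum_range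
        (fun k => (if h : (m + 1) + k < m + 1 + (m + 1) then w ⟨(m + 1) + k, h⟩ else 0) * z ^ k)
        (m + 1)]
      exact h9
    intro k
    by_cases hk : (k : ℕ) < m + 1
    · have hc := congrArg (fun s => Polynomial.coeff s (k : ℕ)) hpolyP
      simp only [Polynomial.coeff_zero] at hc
      rw [ratAuxVecPoly_coeff _ _ _ hk, dif_pos k.is_lt] at hc
      have hidx : (⟨(k : ℕ), k.is_lt⟩ : Fin (m + 1 + (m + 1))) = k := Fin.ext rfl
      rw [hidx] at hc
      exact hc
    · have hk2 : (k : ℕ) - (m + 1) < m + 1 := by have := k.is_lt; omega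
      have hc := congrArg (fun s => Polynomial.coeff s ((k : ℕ) - (m + 1))) hpolyQ
      simp only [Polynomial.coeff_zero] at hc
      rw [ratAuxVecPoly_coeff _ _ _ hk2,
        dif_pos (by omega : (m + 1) + ((k : ℕ) - (m + 1)) < m + 1 + (m + 1))] at hc
      have hidx : (⟨(m + 1) + ((k : ℕ) - (m + 1)), by omega⟩ : Fin (m + 1 + (m + 1))) = k :=
        Fin.ext (by simp; omega)
      rw [hidx] at hc
      exact hc
  -- linear algebra part
  have hker : LinearMap.ker B.mulVecLin = Submodule.span ℝ {v0 m p q} := by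
    ext u
    rw [LinearMap.mem_ker, Matrix.mulVecLin_apply, Submodule.mem_span_singleton]
    rw [show B.mulVec u = (Bc m t pj qj x₀).mulVec u from rfl,
      kernel_char m t pj qj ε f ht_inj ht_mem hqj hfj x₀ hx₀ p q hpdeg hqdeg hq0 hqne hfx₀
      hcop hdeg u]
    constructor
    · rintro ⟨c, hc⟩; exact ⟨c, hc.symm⟩
    · rintro ⟨c, hc⟩; exact ⟨c, hc.symm⟩
  have hv0ne : v0 m p q ≠ 0 := by
    intro h0
    have hlt : (m + 1) + q.natDegree < m + 1 + (m + 1) := by omega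
    have hc := congrFun h0 ⟨(m + 1) + q.natDegree, hlt⟩
    have hval : ((⟨(m + 1) + q.natDegree, hlt⟩ : Fin (m + 1 + (m + 1))) : ℕ)
        = (m + 1) + q.natDegree := rfl
    simp only [v0, Pi.zero_apply, hval] at hc
    rw [if_neg (by omega),
      show ((m + 1) + q.natDegree - (m + 1)) = q.natDegree from by omega] at hc
    exact Polynomial.leadingCoeff_ne_zero.mpr hq0 hc
  have hfinker : Module.finrank ℝ (LinearMap.ker B.mulVecLin) = 1 := by
    rw [hker]
    exact finrank_span_singleton hv0ne
  have hpifr : Module.finrank ℝ (Fin (m + 1 + (m + 1)) → ℝ) = m + 1 + (m + 1) := by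
    rw [Module.finrank_fintype_fun_eq_card, Fintype.card_fin]
  have hrank : B.rank + 1 = m + 1 + (m + 1) := by
    have h1 := LinearMap.finrank_range_add_finrank_ker B.mulVecLin
    rw [hfinker, hpifr] at h1
    rw [Matrix.rank]
    exact h1
  have hkerT : Module.finrank ℝ (LinearMap.ker Bᵀ.mulVecLin) = 1 := by
    have h2 := LinearMap.finrank_range_add_finrank_ker Bᵀ.mulVecLin
    rw [hpifr] at h2
    have h3 : Bᵀ.rank = B.rank := Matrix.rank_transpose B
    have h4 : Bᵀ.rank + Module.finrank ℝ (LinearMap.ker Bᵀ.mulVecLin) = m + 1 + (m + 1) := by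
      rw [Matrix.rank]
      exact h2
    omega
  have hsingle_mem : (Pi.single (li m) (1 : ℝ) : Fin (m + 1 + (m + 1)) → ℝ) ∈ LinearMap.ker Bᵀ.mulVecLin := by
    rw [LinearMap.mem_ker, Matrix.mulVecLin_apply]
    funext j
    show (∑ k, Bᵀ j k * (Pi.single (li m) (1 : ℝ) : Fin (m + 1 + (m + 1)) → ℝ) k) = (0 : ℝ)
    rw [Finset.sum_eq_single (li m)]
    · simp [Matrix.transpose_apply, hB, Bc]
    · intro b _ hb
      simp [Pi.single_apply, hb]
    · intro hmem
      exact absurd (Finset.mem_univ _) hmem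
  have hsne : (Pi.single (li m) (1 : ℝ) : Fin (m + 1 + (m + 1)) → ℝ) ≠ 0 := by
    intro h
    have := congrFun h (li m)
    simp at this
  have hkerT_eq : LinearMap.ker Bᵀ.mulVecLin
      = Submodule.span ℝ {(Pi.single (li m) (1 : ℝ) : Fin (m + 1 + (m + 1)) → ℝ)} := by
    symm
    refine Submodule.eq_of_le_of_finrank_le
      ((Submodule.span_singleton_le_iff_mem _ _).mpr hsingle_mem) ?_
    rw [hkerT, finrank_span_singleton hsne]
  have hindep : ∀ c : Fin (m + 1 + (m + 1)) → ℝ,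
      Matrix.vecMul c B = 0 → ∀ j, j ≠ li m → c j = 0 := by
    intro c hc j hj
    have hmem : c ∈ LinearMap.ker Bᵀ.mulVecLin := by
      rw [LinearMap.mem_ker, Matrix.mulVecLin_apply, Matrix.mulVec_transpose]
      exact hc
    rw [hkerT_eq, Submodule.mem_span_singleton] at hmem
    obtain ⟨a, ha⟩ := hmem
    rw [← ha]
    simp [Pi.single_apply, hj]
  have hWne : Submodule.span ℝ (Set.range B) ≠ ⊤ := by
    intro htop
    have h3 := Matrix.rank_eq_finrank_span_row B
    rw [show B.row = B from rfl, htop, finrank_top, hpifr] at h3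
    omega
  obtain ⟨r, hr⟩ : ∃ r, r ∉ Submodule.span ℝ (Set.range B) := by
    by_contra hcon
    push_neg at hcon
    exact hWne (Submodule.eq_top_iff'.mpr hcon)
  have hli : LinearIndependent ℝ (fun j => (B.updateRow (li m) r) j) := by
    rw [Fintype.linearIndependent_iff]
    intro g hg
    have hsum : ∑ j, g j • (B.updateRow (li m) r) j
        = g (li m) • r + ∑ j ∈ Finset.univ.erase (li m), g j • B j := by
      rw [← Finset.add_sum_erase _ _ (Finset.mem_univ (li m))]
      congr 1
      · rw [Matrix.updateRow_self]
      · refine Finset.sum_congr rfl (fun j hj => ?_)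
        rw [Matrix.updateRow_ne (Finset.ne_of_mem_erase hj)]
    rw [hsum] at hg
    have hmemW : ∑ j ∈ Finset.univ.erase (li m), g j • B j ∈ Submodule.span ℝ (Set.range B) :=
      Submodule.sum_mem _ (fun j _ => Submodule.smul_mem _ _ (Submodule.subset_span ⟨j, rfl⟩))
    by_cases hgl : g (li m) = 0
    · rw [hgl, zero_smul, zero_add] at hg
      have h4 : ∑ j, g j • B j = 0 := by
        rw [← Finset.add_sum_erase _ _ (Finset.mem_univ (li m)), hgl, zero_smul, zero_add, hg]
      have hvm : Matrix.vecMul g B = 0 := by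
        funext i
        have h5 := congrFun h4 i
        rw [Finset.sum_apply] at h5
        simpa [Matrix.vecMul, dotProduct] using h5
      intro j
      by_cases hj : j = li m
      · rw [hj]; exact hgl
      · exact hindep g hvm j hj
    · exfalso
      apply hr
      have h6 : g (li m) • r = -∑ j ∈ Finset.univ.erase (li m), g j • B j :=
        eq_neg_of_add_eq_zero_left hg
      have h7 : r = (g (li m))⁻¹ • (g (li m) • r) := by
        rw [smul_smul, inv_mul_cancel₀ hgl, one_smul]
      rw [h7, h6]
      exact Submodule.smul_mem _ _ (Submodule.neg_mem _ hmemW)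
  have hunit : IsUnit (B.updateRow (li m) r) := Matrix.linearIndependent_rows_iff_isUnit.mp hli
  have hdet_ne : (B.updateRow (li m) r).det ≠ 0 := by
    have := (Matrix.isUnit_iff_isUnit_det _).mp hunit
    exact isUnit_iff_ne_zero.mp this
  apply hdet_ne
  rw [hdecomp]
  simp [hw0]

def psi : Polynomial (Polynomial ℝ) →+* MvPolynomial (Fin 2) ℝ :=
  Polynomial.eval₂RingHom
    (Polynomial.eval₂RingHom MvPolynomial.C (MvPolynomial.X 0)) (MvPolynomial.X 1)

lemma eval_psi (x y : ℝ) (s : Polynomial (Polynomial ℝ)) :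
    MvPolynomial.eval ![x, y] (psi s) = E x y s := by
  have h2 : ((MvPolynomial.eval ![x, y]).comp psi : Polynomial (Polynomial ℝ) →+* ℝ)
      = E x y := by
    apply Polynomial.ringHom_ext
    · intro a
      have h1 : (MvPolynomial.eval ![x, y])
          ((Polynomial.eval₂RingHom MvPolynomial.C (MvPolynomial.X 0)) a)
          = Polynomial.eval x a := by
        have : ((MvPolynomial.eval ![x, y]).comp
            (Polynomial.eval₂RingHom MvPolynomial.C (MvPolynomial.X 0))
              : Polynomial ℝ →+* ℝ) = Polynomial.evalRingHom x := by
          apply Polynomial.ringHom_ext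
          · intro b; simp
          · simp
        have := congrArg (fun g : Polynomial ℝ →+* ℝ => g a) this
        simpa using this
      simpa [psi, E] using h1
    · simp [psi, E]
  have := congrArg (fun g : Polynomial (Polynomial ℝ) →+* ℝ => g s) h2
  simpa using this

end

end RatAux

/-- let `f(x,y)` be a function defined on a neighborhood of the origin in
`ℝ²` which, for each fixed `y`, is a rational function of `x`, and, for each fixed `x`,
is a rational function of `y` of degree at most `d` (with `d` uniform). Then `f` is a
rational function of the two variables jointly: `f = P(x,y)/Q(x,y)` on the neighborhood,
for some polynomials `P, Q` in two variables. -/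
theorem rational_in_each_variable_implies_rational (d : ℕ) (f : ℝ → ℝ → ℝ) (ε : ℝ)
    (hε : 0 < ε)
    (hx : ∀ y : ℝ, |y| < ε → ∃ p q : Polynomial ℝ,
      (∀ x : ℝ, |x| < ε → q.eval x ≠ 0) ∧
      (∀ x : ℝ, |x| < ε → f x y = p.eval x / q.eval x))
    (hy : ∀ x : ℝ, |x| < ε → ∃ p q : Polynomial ℝ,
      p.natDegree ≤ d ∧ q.natDegree ≤ d ∧
      (∀ y : ℝ, |y| < ε → q.eval y ≠ 0) ∧
      (∀ y : ℝ, |y| < ε → f x y = p.eval y / q.eval y)) :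
    ∃ P Q : MvPolynomial (Fin 2) ℝ, Q ≠ 0 ∧
      ∀ x y : ℝ, |x| < ε → |y| < ε → MvPolynomial.eval ![x, y] Q ≠ 0 →
        f x y = MvPolynomial.eval ![x, y] P / MvPolynomial.eval ![x, y] Q := by
  classical
  have hRepEx : ∀ x : ℝ, |x| < ε → ∃ k : ℕ, ∃ p q : Polynomial ℝ,
      p.natDegree ≤ k ∧ q.natDegree ≤ k ∧ (∀ y, |y| < ε → q.eval y ≠ 0) ∧
      (∀ y, |y| < ε → f x y = p.eval y / q.eval y) := fun x h => ⟨d, hy x h⟩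
  have h0ball : |(0:ℝ)| < ε := by simpa using hε
  set S : Set ℕ := {k | ∃ x : ℝ, ∃ h : |x| < ε, Nat.find (hRepEx x h) = k} with hS
  have hSne : S.Nonempty := ⟨Nat.find (hRepEx 0 h0ball), 0, h0ball, rfl⟩
  have hSbdd : ∀ k ∈ S, k ≤ d := by
    rintro k ⟨x, h, rfl⟩
    exact Nat.find_le (hy x h)
  set m := sSup S with hm
  have hmmem : m ∈ S := Nat.sSup_mem hSne ⟨d, hSbdd⟩
  obtain ⟨x₀, hx₀, hDx₀⟩ := hmmem
  have hRepm : ∀ x : ℝ, |x| < ε → ∃ p q : Polynomial ℝ,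
      p.natDegree ≤ m ∧ q.natDegree ≤ m ∧ (∀ y, |y| < ε → q.eval y ≠ 0) ∧
      (∀ y, |y| < ε → f x y = p.eval y / q.eval y) := by
    intro x h
    obtain ⟨p, q, h1, h2, h3, h4⟩ := Nat.find_spec (hRepEx x h)
    have hle : Nat.find (hRepEx x h) ≤ m := le_csSup ⟨d, hSbdd⟩ ⟨x, h, rfl⟩
    exact ⟨p, q, h1.trans hle, h2.trans hle, h3, h4⟩
  -- coprime minimal representation at x₀
  obtain ⟨p₁, q₁, hp₁d, hq₁d, hq₁ne, hf₁⟩ := Nat.find_spec (hRepEx x₀ hx₀)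
  rw [hDx₀] at hp₁d hq₁d
  have hq₁0 : q₁ ≠ 0 := fun h => hq₁ne 0 h0ball (by simp [h])
  set g := GCDMonoid.gcd p₁ q₁ with hg
  have hg0 : g ≠ 0 := by
    intro h
    exact hq₁0 (((gcd_eq_zero_iff _ _).mp h).2)
  set p := p₁ / g with hp
  set q := q₁ / g with hq
  have hpfac : g * p = p₁ :=
    EuclideanDomain.mul_div_cancel' hg0 (gcd_dvd_left _ _)
  have hqfac : g * q = q₁ :=
    EuclideanDomain.mul_div_cancel' hg0 (gcd_dvd_right _ _)
  have hcop : IsCoprime p q := isCoprime_div_gcd_div_gcd hq₁0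
  have hq0 : q ≠ 0 := by
    intro h
    rw [h, mul_zero] at hqfac
    exact hq₁0 hqfac.symm
  have hgev : ∀ y : ℝ, |y| < ε → g.eval y ≠ 0 := by
    intro y hyb hcontra
    apply hq₁ne y hyb
    rw [← hqfac, Polynomial.eval_mul, hcontra, zero_mul]
  have hqne : ∀ y : ℝ, |y| < ε → q.eval y ≠ 0 := by
    intro y hyb hcontra
    apply hq₁ne y hyb
    rw [← hqfac, Polynomial.eval_mul, hcontra, mul_zero]
  have hfx₀ : ∀ y : ℝ, |y| < ε → f x₀ y = p.eval y / q.eval y := by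
    intro y hyb
    rw [hf₁ y hyb, ← hpfac, ← hqfac, Polynomial.eval_mul, Polynomial.eval_mul,
      mul_div_mul_left _ _ (hgev y hyb)]
  have hpdeg : p.natDegree ≤ m := by
    by_cases hp₁0 : p₁ = 0
    · have hz : p = 0 := by rw [hp, hp₁0, EuclideanDomain.zero_div]
      simp [hz]
    · exact le_trans (Polynomial.natDegree_le_of_dvd ⟨g, by rw [← hpfac]; ring⟩ hp₁0) hp₁d
  have hqdeg : q.natDegree ≤ m :=
    le_trans (Polynomial.natDegree_le_of_dvd ⟨g, by rw [← hqfac]; ring⟩ hq₁0) hq₁d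
  have hdeg : q.natDegree = m ∨ (p.natDegree = m ∧ p ≠ 0) := by
    by_cases hm0 : m = 0
    · left; omega
    · by_contra hcon
      push_neg at hcon
      obtain ⟨hqm, hpm⟩ := hcon
      have hqlt : q.natDegree < m := lt_of_le_of_ne hqdeg hqm
      have hplt : p.natDegree < m := by
        by_cases hp0 : p = 0
        · rw [hp0, Polynomial.natDegree_zero]; omega
        · exact lt_of_le_of_ne hpdeg (fun hh => hp0 (hpm hh))
      have hwit : ∃ p' q' : Polynomial ℝ, p'.natDegree ≤ m - 1 ∧ q'.natDegree ≤ m - 1 ∧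
          (∀ y, |y| < ε → q'.eval y ≠ 0) ∧ (∀ y, |y| < ε → f x₀ y = p'.eval y / q'.eval y) :=
        ⟨p, q, by omega, by omega, hqne, hfx₀⟩
      have hfle : Nat.find (hRepEx x₀ hx₀) ≤ m - 1 := Nat.find_le hwit
      omega
  -- sample points
  set t : Fin (m + 1 + (m + 1)) → ℝ := fun j => ε / (((j : ℕ) : ℝ) + 2) with ht
  have ht_mem : ∀ j, |t j| < ε := by
    intro j
    have h0 : (0:ℝ) ≤ (((j : ℕ) : ℕ) : ℝ) := Nat.cast_nonneg _
    have h2 : (0:ℝ) < (((j : ℕ) : ℕ) : ℝ) + 2 := by positivity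
    rw [ht]
    rw [abs_of_pos (by positivity)]
    rw [div_lt_iff₀ h2]
    nlinarith [hε]
  have ht_inj : Function.Injective t := by
    intro a b hab
    simp only [ht] at hab
    rw [div_eq_div_iff (by positivity) (by positivity)] at hab
    have h4 : (((b : ℕ) : ℝ)) + 2 = (((a : ℕ) : ℝ)) + 2 :=
      mul_left_cancel₀ (ne_of_gt hε) hab
    have h5 : ((a : ℕ) : ℝ) = ((b : ℕ) : ℝ) := by linarith
    have h6 : (a : ℕ) = (b : ℕ) := by exact_mod_cast h5
    exact Fin.ext h6
  choose pj qj hqj hfj using fun j : Fin (m + 1 + (m + 1)) => hx (t j) (ht_mem j)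
  refine ⟨RatAux.psi ((RatAux.AP m t pj qj).det), RatAux.psi ((RatAux.AQ m t pj qj).det),
    ?_, ?_⟩
  · intro hzero
    apply RatAux.Q_ne_zero m t pj qj ε hε f ht_inj ht_mem hqj hfj x₀ hx₀ p q hpdeg hqdeg hqne
      hfx₀ hcop hdeg
    apply Polynomial.funext
    intro z
    rw [Polynomial.eval_zero, Polynomial.eval_map]
    have h5 := RatAux.eval_psi x₀ z ((RatAux.AQ m t pj qj).det)
    rw [hzero] at h5
    simp only [map_zero] at h5
    exact h5.symm
  · intro x y hxb hyb hQne
    have hEQy : MvPolynomial.eval ![x, y] (RatAux.psi ((RatAux.AQ m t pj qj).det))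
        = RatAux.E x y ((RatAux.AQ m t pj qj).det) := RatAux.eval_psi _ _ _
    obtain ⟨px, qx, hpxd, hqxd, hqx, hfx⟩ := hRepm x hxb
    rw [RatAux.eval_psi, RatAux.eval_psi]
    exact RatAux.main_identity m t pj qj f ε ht_inj ht_mem hqj hfj x hxb px qx hpxd hqxd hqx
      hfx y hyb (by rw [← hEQy]; exact hQne)
end
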